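/- Let B be an n×n Hermitian positive definite matrix, a ∈ ℂ^n a nonzero vector, and c > 0. Then a^H B^{-1} a is a positive real number, and the minimum of w^H B w over all w ∈ ℂ^n satisfying Re(a^H w) ≥ c equals c² / (a^H B^{-1} a), attained uniquely at w* = (c / (a^H B^{-1} a)) · B^{-1} a. -/

import Mathlib

open scoped BigOperators ComplexOrder
open Matrix

noncomputable section

/-- for Hermitian positive definite `B`, nonzero `a` and `c > 0`,
`a^H B⁻¹ a` is a positive real, and the minimum of `w^H B w` over `Re(a^H w) ≥ c`
equals `c² / (a^H B⁻¹ a)`, attained uniquely at `w* = (c / (a^H B⁻¹ a)) · B⁻¹ a`. -/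
theorem stmt_10 (n : ℕ) (hn : 0 < n) (B : Matrix (Fin n) (Fin n) ℂ)
    (hB : B.PosDef) (a : Fin n → ℂ) (ha : a ≠ 0) (c : ℝ) (hc : 0 < c) :
    ((star a ⬝ᵥ B⁻¹ *ᵥ a).im = 0 ∧ 0 < (star a ⬝ᵥ B⁻¹ *ᵥ a).re) ∧
    IsLeast {v : ℝ | ∃ w : Fin n → ℂ, c ≤ (star a ⬝ᵥ w).re ∧ v = (star w ⬝ᵥ B *ᵥ w).re}
      (c ^ 2 / (star a ⬝ᵥ B⁻¹ *ᵥ a).re) ∧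
    (∀ w : Fin n → ℂ, c ≤ (star a ⬝ᵥ w).re →
      (star w ⬝ᵥ B *ᵥ w).re = c ^ 2 / (star a ⬝ᵥ B⁻¹ *ᵥ a).re →
      w = ((c / (star a ⬝ᵥ B⁻¹ *ᵥ a).re : ℝ) : ℂ) • (B⁻¹ *ᵥ a)) := by
  classical
  have hBinv : (B⁻¹).PosDef := hB.inv
  set u : Fin n → ℂ := B⁻¹ *ᵥ a with hu
  set t : ℂ := star a ⬝ᵥ u with ht
  have htpos : (0 : ℂ) < t := hBinv.dotProduct_mulVec_pos ha
  have htre : 0 < t.re := (Complex.lt_def.1 htpos).1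
  have htim : t.im = 0 := ((Complex.lt_def.1 htpos).2).symm
  have htC : (t.re : ℂ) = t := Complex.ext rfl (by simp [htim])
  have ht0 : t ≠ 0 := by
    intro h; rw [h] at htre; simp at htre
  have hBa : B *ᵥ u = a := by
    rw [hu, Matrix.mulVec_mulVec, Matrix.mul_nonsing_inv _
      ((Matrix.isUnit_iff_isUnit_det _).1 hB.isUnit), Matrix.one_mulVec]
  have hrow : ∀ x : Fin n → ℂ, star u ⬝ᵥ B *ᵥ x = star a ⬝ᵥ x := by
    intro x
    have h1 : star u ᵥ* B = star a := by
      conv_lhs => rw [← hB.isHermitian.eq]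
      rw [← Matrix.star_mulVec, hBa]
    rw [Matrix.dotProduct_mulVec, h1]
  have hsym : ∀ x y : Fin n → ℂ, star x ⬝ᵥ B *ᵥ y = star (star y ⬝ᵥ B *ᵥ x) := by
    intro x y
    rw [Matrix.star_dotProduct, Matrix.star_mulVec, hB.isHermitian.eq,
      ← Matrix.dotProduct_mulVec]
  have hstarT : star t = t := by
    rw [Complex.star_def, Complex.conj_eq_iff_im]; exact htim
  -- decomposition identity
  have expand : ∀ w : Fin n → ℂ,
      star w ⬝ᵥ B *ᵥ w
        = (Complex.normSq ((star a ⬝ᵥ w) / t) : ℂ) * t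
          + star (w - ((star a ⬝ᵥ w) / t) • u) ⬝ᵥ B *ᵥ (w - ((star a ⬝ᵥ w) / t) • u) := by
    intro w
    set s : ℂ := star a ⬝ᵥ w with hs
    set r : ℂ := s / t with hr
    set d : Fin n → ℂ := w - r • u with hd
    have hwd : w = r • u + d := by rw [hd]; abel
    have hst : s = r * t := by rw [hr, div_mul_cancel₀ _ ht0]
    have h1 : star u ⬝ᵥ B *ᵥ d = 0 := by
      rw [hrow, hd, dotProduct_sub, dotProduct_smul, ← ht, ← hs, smul_eq_mul,
        ← hst, sub_self]
    have h2' : star d ⬝ᵥ B *ᵥ d = star w ⬝ᵥ B *ᵥ d := by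
      rw [hd, star_sub, star_smul, sub_dotProduct, smul_dotProduct, smul_eq_mul,
        h1, mul_zero, sub_zero]
    have h5 : star w ⬝ᵥ B *ᵥ u = star r * t := by
      rw [hsym w u, hrow, ← hs, hst, star_mul', hstarT]
    have h4 : star w ⬝ᵥ B *ᵥ w = star r * r * t + star w ⬝ᵥ B *ᵥ d := by
      have hw2 : star w ⬝ᵥ B *ᵥ w = star w ⬝ᵥ B *ᵥ (r • u + d) := by rw [← hwd]
      rw [hw2, Matrix.mulVec_add, Matrix.mulVec_smul, dotProduct_add,
        dotProduct_smul, smul_eq_mul, h5]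
      ring
    rw [h4, ← h2', Complex.normSq_eq_conj_mul_self]
    rfl
  have hdd_nonneg : ∀ d : Fin n → ℂ,
      0 ≤ (star d ⬝ᵥ B *ᵥ d).re ∧ (star d ⬝ᵥ B *ᵥ d).im = 0 := by
    intro d
    have := hB.posSemidef.dotProduct_mulVec_nonneg d
    exact ⟨(Complex.le_def.1 this).1, ((Complex.le_def.1 this).2).symm⟩
  have expand_re : ∀ w : Fin n → ℂ,
      (star w ⬝ᵥ B *ᵥ w).re
        = Complex.normSq ((star a ⬝ᵥ w) / t) * t.re
          + (star (w - ((star a ⬝ᵥ w) / t) • u) ⬝ᵥ B *ᵥ (w - ((star a ⬝ᵥ w) / t) • u)).re := by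
    intro w
    rw [expand w]
    simp [Complex.add_re, Complex.re_ofReal_mul]
  have hnormSqDiv : ∀ z : ℂ, Complex.normSq (z / t) * t.re = Complex.normSq z / t.re := by
    intro z
    rw [map_div₀]
    have hns : Complex.normSq t = t.re ^ 2 := by
      rw [Complex.normSq_apply, htim]; ring
    rw [hns]
    field_simp
  have hfeas_normSq : ∀ w : Fin n → ℂ, c ≤ (star a ⬝ᵥ w).re →
      c ^ 2 ≤ Complex.normSq (star a ⬝ᵥ w) := by
    intro w hw
    rw [Complex.normSq_apply]
    nlinarith [sq_nonneg (star a ⬝ᵥ w).im]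
  have key : ∀ w : Fin n → ℂ, c ≤ (star a ⬝ᵥ w).re →
      c ^ 2 / t.re ≤ (star w ⬝ᵥ B *ᵥ w).re := by
    intro w hw
    have h3 := (hdd_nonneg (w - ((star a ⬝ᵥ w) / t) • u)).1
    have h4 : c ^ 2 / t.re ≤ Complex.normSq (star a ⬝ᵥ w) / t.re := by
      gcongr
      exact hfeas_normSq w hw
    rw [expand_re w, hnormSqDiv]
    linarith
  refine ⟨⟨htim, htre⟩, ⟨⟨?_, ?_⟩, ?_⟩⟩
  · -- membership
    refine ⟨((c / t.re : ℝ) : ℂ) • u, ?_, ?_⟩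
    · have h : star a ⬝ᵥ (((c / t.re : ℝ) : ℂ) • u) = ((c / t.re : ℝ) : ℂ) * t := by
        rw [dotProduct_smul, smul_eq_mul, ← ht]
      rw [h, Complex.re_ofReal_mul, div_mul_cancel₀ _ htre.ne']
    · have h : star (((c / t.re : ℝ) : ℂ) • u) ⬝ᵥ B *ᵥ (((c / t.re : ℝ) : ℂ) • u)
          = (((c / t.re) ^ 2 : ℝ) : ℂ) * t := by
        rw [star_smul, smul_dotProduct, Matrix.mulVec_smul, dotProduct_smul,
          hrow u, ← ht, smul_eq_mul, smul_eq_mul]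
        push_cast
        simp [Complex.conj_ofReal]
        ring
      rw [h, Complex.re_ofReal_mul]
      field_simp
  · -- lower bound
    rintro v ⟨w, hw, rfl⟩
    exact key w hw
  · -- uniqueness
    intro w hw hval
    set s : ℂ := star a ⬝ᵥ w with hs
    set d : Fin n → ℂ := w - (s / t) • u with hd
    have hD := hdd_nonneg d
    have hEq := expand_re w
    rw [hval, hnormSqDiv, ← hs, ← hd] at hEq
    have h1 : c ^ 2 ≤ Complex.normSq s := hfeas_normSq w hw
    have h2 : c ^ 2 / t.re ≤ Complex.normSq s / t.re := by gcongr
    have hDz : (star d ⬝ᵥ B *ᵥ d).re = 0 := by linarith [hD.1]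
    have hd0 : d = 0 := by
      by_contra hne
      have := (Complex.lt_def.1 (hB.dotProduct_mulVec_pos hne)).1
      simp only [Complex.zero_re] at this
      linarith
    have hnsq : Complex.normSq s = c ^ 2 := by
      have h3 : c ^ 2 / t.re = Complex.normSq s / t.re := by linarith
      field_simp at h3
      linarith
    have hsc : s = (c : ℂ) := by
      have hre : s.re = c := by
        have := Complex.normSq_apply s
        nlinarith [sq_nonneg s.im, hw, hc]
      have him : s.im = 0 := by
        have := Complex.normSq_apply s
        nlinarith [hre]
      exact Complex.ext hre him
    rw [hd] at hd0
    have hw2 : w = (s / t) • u := sub_eq_zero.1 hd0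
    rw [hw2, hsc, ← htC, ← Complex.ofReal_div]
    simp
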